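/- If n ∈ ℕ, w ∈ A⁺ and the power wⁿ belongs to L(u), then n < 2λ(g+1)C². -/

import Mathlib

open List Filter

section Defs

variable {A : Type*}

/-- The segment `u_[i,j)` of the sequence `u`. -/
def seg (u : ℕ → A) (i j : ℕ) : List A :=
  (List.range (j - i)).map fun k => u (i + k)

/-- A substitution applied to a word, letter by letter. -/
def substWord (σ : A → List A) (w : List A) : List A := w.flatMap σ

/-- `σ^p` applied to a word. -/
def substPow (σ : A → List A) (p : ℕ) (w : List A) : List A := (substWord σ)^[p] w

/-- A substitution is primitive if some power of it sends every letter to a word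
containing every letter. -/
def IsPrimitiveSubst (σ : A → List A) : Prop :=
  ∃ k : ℕ, ∀ a b : A, a ∈ substPow σ k [b]

/-- `u` is a fixed point of `σ`: the image of every prefix of `u` is again a prefix of `u`. -/
def IsFixedPoint (σ : A → List A) (u : ℕ → A) : Prop :=
  ∀ m : ℕ, substWord σ (seg u 0 m) = seg u 0 (substWord σ (seg u 0 m)).length

/-- `u` is aperiodic under the left shift: `T^i u ≠ u` for all `i ≥ 1`. -/
def AperiodicSeq (u : ℕ → A) : Prop := ∀ i : ℕ, 1 ≤ i → (fun n => u (n + i)) ≠ u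

/-- The set `E_p` of natural `p`-cutting points. -/
def cutPoints (σ : A → List A) (u : ℕ → A) (p : ℕ) : Set ℕ :=
  { m | ∃ n : ℕ, m = (substPow σ p (seg u 0 n)).length }

/-- Unilateral recognizability of `σ` (with fixed point `u`). -/
def UnilaterallyRecognizable (σ : A → List A) (u : ℕ → A) : Prop :=
  ∃ L : ℕ, 1 ≤ L ∧ ∀ i j : ℕ,
    seg u i (i + L) = seg u j (j + L) → i ∈ cutPoints σ u 1 → j ∈ cutPoints σ u 1

/-- `L_n(u)`: the set of factors of `u` of length `n`. -/
def factors (u : ℕ → A) (n : ℕ) : Set (List A) := { w | ∃ i : ℕ, w = seg u i (i + n) }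

/-- `L(u)`: the language of `u` (including the empty word). -/
def lang (u : ℕ → A) : Set (List A) := { w | ∃ i n : ℕ, w = seg u i (i + n) }

/-- `w^n`: the concatenation of `n` copies of `w`. -/
def wpow (w : List A) (n : ℕ) : List A := (List.replicate n w).flatten

/-- A nonempty word `v` is primitive if `v = w^n` with `w` nonempty forces `w = v`. -/
def PrimitiveWord (v : List A) : Prop :=
  ∀ w : List A, w ≠ [] → ∀ n : ℕ, 1 ≤ n → v = wpow w n → w = v

/-- `g` is a gap of occurrences of `w` in `u` if every interval of length `g` in `ℤ₊`
contains an occurrence of `w`. -/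
def IsGap (u : ℕ → A) (w : List A) (g : ℕ) : Prop := ∀ i : ℕ, w <:+: seg u i (i + g)

/-- The minimal gap of a word. -/
noncomputable def minGap (u : ℕ → A) (w : List A) : ℕ := sInf { g | IsGap u w g }

/-- `g`: the maximum over `w ∈ L₂(u)` of the minimal gap of `w`. -/
noncomputable def gapConst (u : ℕ → A) : ℕ :=
  sSup { m | ∃ w ∈ factors u 2, m = minGap u w }

/-- A natural `p`-cutting `{α, σ^p(u_{i'}), …, σ^p(u_{i'+k-1}), β}` of `u_[i,i+ℓ)`. -/
def IsNaturalCutting (σ : A → List A) (u : ℕ → A) (p i ℓ : ℕ)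
    (α : List A) (i' k : ℕ) (β : List A) : Prop :=
  1 ≤ k ∧
  α <:+ substPow σ p [u (i' - 1)] ∧
  β <+: substPow σ p [u (i' + k)] ∧
  seg u i (i + ℓ) = α ++ substPow σ p (seg u i' (i' + k)) ++ β ∧
  i + α.length = (substPow σ p (seg u 0 i')).length

section Fin

variable [Fintype A] [Nonempty A] [DecidableEq A]

/-- The incidence matrix of a substitution: the `(a,b)` entry is `|σ(a)|_b`. -/
def incMatrix (σ : A → List A) : Matrix A A ℕ := Matrix.of fun a b => (σ a).count b

/-- The incidence matrix as a real matrix. -/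
noncomputable def incMatrixR (σ : A → List A) : Matrix A A ℝ :=
  Matrix.of fun a b => ((σ a).count b : ℝ)

/-- `S_p = max_{a ∈ A} |σ^p(a)|`. -/
def Sp (σ : A → List A) (p : ℕ) : ℕ :=
  Finset.univ.sup' Finset.univ_nonempty fun a => (substPow σ p [a]).length

/-- `I_p = min_{a ∈ A} |σ^p(a)|`. -/
def Ip (σ : A → List A) (p : ℕ) : ℕ :=
  Finset.univ.inf' Finset.univ_nonempty fun a => (substPow σ p [a]).length

/-- `C = ⌈(max_b β_b)/(min_b β_b)⌉` for a positive eigenvector `β`. -/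
noncomputable def Cst (β : A → ℝ) : ℕ :=
  ⌈(Finset.univ.sup' Finset.univ_nonempty β) / (Finset.univ.inf' Finset.univ_nonempty β)⌉₊

/-- `K = ⌈λ C² max{2(g+1), (#A)²}⌉`. -/
noncomputable def Kst (u : ℕ → A) (lam : ℝ) (β : A → ℝ) : ℕ :=
  ⌈lam * (Cst β : ℝ) ^ 2 *
    max (2 * ((gapConst u : ℝ) + 1)) ((Fintype.card A : ℝ) ^ 2)⌉₊

/-- The constant `p₀` of Lemma 4.2. -/
noncomputable def p0 (u : ℕ → A) (lam : ℝ) (β : A → ℝ) : ℕ :=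
  (Kst u lam β) ^ 2 * ((Cst β) ^ 4 * (Kst u lam β + 1) + 2 * (Cst β) ^ 2 + 1) *
    (∑ n ∈ Finset.Icc ((Cst β) ^ 2 * (Kst u lam β + 1) + 2)
        ((Kst u lam β + 1) * (Cst β) ^ 6 + 2 * (Cst β) ^ 4 + (Cst β) ^ 2 + 2), n) + 1

/-- The constant `L₀ = (C⁴(K+1)+2C²+1) S_{p₀}`. -/
noncomputable def L0 (σ : A → List A) (u : ℕ → A) (lam : ℝ) (β : A → ℝ) : ℕ :=
  ((Cst β) ^ 4 * (Kst u lam β + 1) + 2 * (Cst β) ^ 2 + 1) * Sp σ (p0 u lam β)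

/-- The ℓ¹ norm of a vector. -/
def l1norm (f : A → ℝ) : ℝ := ∑ a, |f a|

/-- The projective metric on positive row vectors. -/
noncomputable def projMetric (x y : A → ℝ) : ℝ :=
  Real.log ((Finset.univ.sup' Finset.univ_nonempty fun a => x a / y a) /
    (Finset.univ.inf' Finset.univ_nonempty fun a => x a / y a))

/-- The Birkhoff contraction coefficient of a matrix. -/
noncomputable def birkhoff (M : Matrix A A ℝ) : ℝ :=
  sSup { r | ∃ x y : A → ℝ, (∀ a, 0 < x a) ∧ (∀ a, 0 < y a) ∧
    LinearIndependent ℝ ![x, y] ∧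
    r = projMetric (Matrix.vecMul x M) (Matrix.vecMul y M) / projMetric x y }

end Fin

/-- Membership in the vertex set `V^*`: pairs `(xac, ybc)` of factors of `u` of length
`N + L₁ + 1` with `a ≠ b` and `|c| = L₁`. -/
def memVstar (u : ℕ → A) (N L₁ : ℕ) (p : List A × List A) : Prop :=
  ∃ (x y c : List A) (a b : A), a ≠ b ∧
    x.length = N ∧ y.length = N ∧ c.length = L₁ ∧
    p.1 = x ++ a :: c ∧ p.2 = y ++ b :: c ∧
    p.1 ∈ factors u (N + L₁ + 1) ∧ p.2 ∈ factors u (N + L₁ + 1)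

/-- An edge between representatives: there is a word `w` with `s'w` a suffix of `σ(s)` and
`t'w` a suffix of `σ(t)`. -/
def edgeRep (σ : A → List A) (p q : List A × List A) : Prop :=
  ∃ w : List A, w ≠ [] ∧ (q.1 ++ w) <:+ substWord σ p.1 ∧ (q.2 ++ w) <:+ substWord σ p.2

/-- An edge in the graph `G` between the unordered pairs represented by `p` and `q`. -/
def graphEdge (σ : A → List A) (p q : List A × List A) : Prop :=
  edgeRep σ p q ∨ edgeRep σ p q.swap ∨ edgeRep σ p.swap q ∨ edgeRep σ p.swap q.swap

/-- A representative generates a gap of natural 1-cutting points. -/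
def genGapRep (σ : A → List A) (p : List A × List A) : Prop :=
  ∃ (α β : A) (γ δ : List A),
    (σ α <:+ σ β ∧ σ α ≠ σ β) ∧
    List.Forall₂ (fun s t => σ s = σ t) γ δ ∧
    (α :: γ) <:+ substWord σ p.1 ∧ (β :: δ) <:+ substWord σ p.2

/-- The unordered pair represented by `p` generates a gap of natural 1-cutting points. -/
def genGap (σ : A → List A) (p : List A × List A) : Prop :=
  genGapRep σ p ∨ genGapRep σ p.swap

/-- The list of consecutive two-letter blocks of a word. -/
def pairsList (l : List A) : List (List A) :=
  List.zipWith (fun a b => [a, b]) l l.tail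

end Defs


section SegLemmas
variable {A : Type*} {u : ℕ → A}

lemma seg_length (u : ℕ → A) (i j : ℕ) : (seg u i j).length = j - i := by simp [seg]

lemma seg_getElem {i j e : ℕ} (h : e < (seg u i j).length) : (seg u i j)[e] = u (i + e) := by
  simp [seg]

lemma seg_eq_of_forall {a b L : ℕ} (h : ∀ e < L, u (a + e) = u (b + e)) :
    seg u a (a + L) = seg u b (b + L) := by
  apply List.ext_getElem
  · simp [seg_length]
  · intro e h1 h2
    rw [seg_getElem, seg_getElem]
    exact h e (by simp [seg_length] at h1; omega)

lemma forall_of_seg_eq {a b L : ℕ} (h : seg u a (a + L) = seg u b (b + L)) :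
    ∀ e < L, u (a + e) = u (b + e) := by
  intro e he
  have h1 : (seg u a (a+L))[e]'(by simp [seg_length]; omega) =
      (seg u b (b+L))[e]'(by simp [seg_length]; omega) := by congr 1
  rwa [seg_getElem, seg_getElem] at h1

lemma seg_append {i k j : ℕ} (h1 : i ≤ k) (h2 : k ≤ j) :
    seg u i k ++ seg u k j = seg u i j := by
  apply List.ext_getElem
  · simp [seg_length]; omega
  · intro e h he
    simp only [List.length_append, seg_length] at h
    rcases Nat.lt_or_ge e (k - i) with hc | hc
    · rw [List.getElem_append_left (by simp [seg_length]; omega), seg_getElem, seg_getElem]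
    · rw [List.getElem_append_right (by simp [seg_length]; omega), seg_getElem, seg_getElem]
      congr 1
      simp [seg_length]
      omega

lemma seg_single (i : ℕ) : seg u i (i + 1) = [u i] := by
  simp [seg, List.range_succ]

lemma seg_infix_seg {i a b j : ℕ} (h1 : i ≤ a) (h2 : a ≤ b) (h3 : b ≤ j) :
    seg u a b <:+: seg u i j :=
  ⟨seg u i a, seg u b j, by rw [seg_append h1 h2, seg_append (h1.trans h2) h3]⟩

lemma infix_seg {x : List A} {i L : ℕ} (h : x <:+: seg u i (i + L)) :
    ∃ q, i ≤ q ∧ q + x.length ≤ i + L ∧ ∀ e (he : e < x.length), u (q + e) = x[e] := by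
  obtain ⟨s, t, hst⟩ := h
  refine ⟨i + s.length, by omega, ?_, ?_⟩
  · have := congrArg List.length hst
    simp [seg_length] at this
    omega
  · intro e he
    have hlen : s.length + e < (seg u i (i + L)).length := by
      have := congrArg List.length hst
      simp [seg_length] at this ⊢
      omega
    have hlen2 : s.length + e < ((s ++ x) ++ t).length := by
      have := congrArg List.length hst
      simp [seg_length] at this ⊢
      omega
    have h1 : ((s ++ x) ++ t)[s.length + e]'hlen2 = u (i + (s.length + e)) :=
      (List.getElem_of_eq hst hlen2).trans (seg_getElem _)
    have h2 : ((s ++ x) ++ t)[s.length + e]'hlen2 = x[e] := by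
      rw [List.getElem_append_left (by simp; omega), List.getElem_append_right (by simp)]
      congr 1
      omega
    rw [h2] at h1
    rw [h1]
    congr 1
    omega

lemma seg_occ_infix {x : List A} {i L q : ℕ} (hq : i ≤ q) (hL : q + x.length ≤ i + L)
    (h : seg u q (q + x.length) = x) : x <:+: seg u i (i + L) := by
  rw [← h]
  exact seg_infix_seg hq (by omega) hL

end SegLemmas

section SubstLemmas
variable {A : Type*} {σ : A → List A}

lemma substWord_append (x y : List A) :
    substWord σ (x ++ y) = substWord σ x ++ substWord σ y := List.flatMap_append ..

lemma substPow_append (p : ℕ) (x y : List A) :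
    substPow σ p (x ++ y) = substPow σ p x ++ substPow σ p y := by
  induction p generalizing x y with
  | zero => rfl
  | succ p ih =>
      show (substWord σ)^[p+1] _ = (substWord σ)^[p+1] _ ++ (substWord σ)^[p+1] _
      rw [Function.iterate_succ_apply, Function.iterate_succ_apply,
        Function.iterate_succ_apply, substWord_append]
      exact ih _ _

lemma substPow_succ (p : ℕ) (x : List A) :
    substPow σ (p + 1) x = substWord σ (substPow σ p x) :=
  Function.iterate_succ_apply' _ _ _

lemma substPow_add (a b : ℕ) (x : List A) :
    substPow σ (a + b) x = substPow σ a (substPow σ b x) :=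
  Function.iterate_add_apply _ _ _ _

lemma substWord_ne_nil (hσne : ∀ a, σ a ≠ []) {x : List A} (hx : x ≠ []) :
    substWord σ x ≠ [] := by
  cases x with
  | nil => exact absurd rfl hx
  | cons a x =>
      show (a :: x).flatMap σ ≠ []
      rw [List.flatMap_cons]
      simp only [ne_eq, List.append_eq_nil_iff]
      exact fun h => hσne a h.1

lemma substPow_ne_nil (hσne : ∀ a, σ a ≠ []) (p : ℕ) {x : List A} (hx : x ≠ []) :
    substPow σ p x ≠ [] := by
  induction p with
  | zero => exact hx
  | succ p ih => rw [substPow_succ]; exact substWord_ne_nil hσne ih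

lemma one_le_length_substPow (hσne : ∀ a, σ a ≠ []) (p : ℕ) (a : A) :
    1 ≤ (substPow σ p [a]).length :=
  List.length_pos_iff.mpr (substPow_ne_nil hσne p (by simp))

lemma length_le_length_substPow (hσne : ∀ a, σ a ≠ []) (p : ℕ) (x : List A) :
    x.length ≤ (substPow σ p x).length := by
  induction x with
  | nil => simp [substPow_append]
  | cons a x ih =>
      have : substPow σ p (a :: x) = substPow σ p [a] ++ substPow σ p x := by
        rw [← substPow_append]; rfl
      rw [this, List.length_append, List.length_cons]
      have := one_le_length_substPow hσne p a
      omega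

/-- fixed point iterates -/
lemma fixpow {u : ℕ → A} (hfix : IsFixedPoint σ u) (p m : ℕ) :
    substPow σ p (seg u 0 m) = seg u 0 (substPow σ p (seg u 0 m)).length := by
  induction p with
  | zero => show seg u 0 m = seg u 0 (seg u 0 m).length; rw [seg_length]; norm_num
  | succ p ih =>
      rw [substPow_succ, ih, hfix]
      rw [← ih, ← substPow_succ, seg_length]
      norm_num

end SubstLemmas

section CutLemmas
variable {A : Type*} {σ : A → List A} {u : ℕ → A}

/-- cutting points -/
def cutP (σ : A → List A) (u : ℕ → A) (p t : ℕ) : ℕ := (substPow σ p (seg u 0 t)).length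

lemma substPow_nil (p : ℕ) : substPow σ p ([] : List A) = [] := by
  induction p with
  | zero => rfl
  | succ p ih => rw [substPow_succ, ih]; rfl

lemma cutP_zero (p : ℕ) : cutP σ u p 0 = 0 := by
  have : seg u 0 0 = [] := by simp [seg]
  simp [cutP, this, substPow_nil]

lemma seg_zero_succ (t : ℕ) : seg u 0 (t + 1) = seg u 0 t ++ seg u t (t + 1) :=
  (seg_append (Nat.zero_le t) (Nat.le_succ t)).symm

lemma cutP_succ (p t : ℕ) :
    cutP σ u p (t + 1) = cutP σ u p t + (substPow σ p [u t]).length := by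
  rw [cutP, seg_zero_succ, substPow_append, List.length_append, seg_single]
  rfl

lemma cutP_mono (p : ℕ) {t t' : ℕ} (h : t ≤ t') : cutP σ u p t ≤ cutP σ u p t' := by
  induction t' with
  | zero => simp_all
  | succ t' ih =>
      rcases Nat.lt_or_ge t (t' + 1) with hc | hc
      · have := ih (by omega)
        rw [cutP_succ]
        omega
      · have heq : t = t' + 1 := by omega
        simp [heq]

lemma self_le_cutP (hσne : ∀ a, σ a ≠ []) (p t : ℕ) : t ≤ cutP σ u p t := by
  induction t with
  | zero => omega
  | succ t ih =>
      rw [cutP_succ]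
      have := one_le_length_substPow hσne (σ := σ) p (u t)
      omega

lemma cutP_block (hfix : IsFixedPoint σ u) (p t k : ℕ) :
    seg u (cutP σ u p t) (cutP σ u p (t + k)) = substPow σ p (seg u t (t + k)) := by
  have h1 : seg u 0 t ++ seg u t (t + k) = seg u 0 (t + k) :=
    seg_append (Nat.zero_le t) (by omega)
  have h2 := fixpow hfix p (t + k)
  have h3 := fixpow hfix p t
  have h4 : seg u 0 (cutP σ u p (t + k)) =
      seg u 0 (cutP σ u p t) ++ substPow σ p (seg u t (t + k)) := by
    simp only [cutP]
    rw [← h2, ← h3, ← substPow_append, h1]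
  have h5 : seg u 0 (cutP σ u p (t + k)) =
      seg u 0 (cutP σ u p t) ++ seg u (cutP σ u p t) (cutP σ u p (t + k)) :=
    (seg_append (Nat.zero_le _) (cutP_mono p (by omega))).symm
  exact List.append_cancel_left (h5.symm.trans h4)

section Fin
variable [Fintype A] [Nonempty A]

lemma len_le_Sp (p : ℕ) (a : A) : (substPow σ p [a]).length ≤ Sp σ p :=
  Finset.le_sup' (fun a => (substPow σ p [a]).length) (Finset.mem_univ a)

lemma cutP_add_le (p t k : ℕ) : cutP σ u p (t + k) ≤ cutP σ u p t + k * Sp σ p := by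
  induction k with
  | zero => simp
  | succ k ih =>
      have h1 : t + (k+1) = (t + k) + 1 := by omega
      rw [h1, cutP_succ]
      have := len_le_Sp (σ := σ) p (u (t + k))
      have h2 : (k+1) * Sp σ p = k * Sp σ p + Sp σ p := by ring
      omega

lemma exists_cut_ge (hσne : ∀ a, σ a ≠ []) (p i : ℕ) :
    ∃ t, i ≤ cutP σ u p t ∧ cutP σ u p t ≤ i + Sp σ p := by
  have hex : ∃ t, i ≤ cutP σ u p t := ⟨i, self_le_cutP hσne p i⟩
  classical
  let t₀ := Nat.find hex
  refine ⟨t₀, Nat.find_spec hex, ?_⟩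
  rcases Nat.eq_zero_or_pos t₀ with h0 | h0
  · have : cutP σ u p t₀ = 0 := by rw [h0]; exact cutP_zero p
    omega
  · have hlt : ¬ i ≤ cutP σ u p (t₀ - 1) := Nat.find_min hex (by omega)
    have h1 : t₀ - 1 + 1 = t₀ := by omega
    have h2 := cutP_succ (σ := σ) (u := u) p (t₀ - 1)
    rw [h1] at h2
    have := len_le_Sp (σ := σ) p (u (t₀ - 1))
    omega

omit [Fintype A] [Nonempty A] in
lemma exists_cut_cover (hσne : ∀ a, σ a ≠ []) (p s : ℕ) :
    ∃ t, cutP σ u p t ≤ s ∧ s < cutP σ u p (t + 1) := by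
  have hex : ∃ t, s < cutP σ u p (t + 1) :=
    ⟨s, by have := self_le_cutP (σ := σ) (u := u) hσne p (s+1); omega⟩
  classical
  let t₁ := Nat.find hex
  refine ⟨t₁, ?_, Nat.find_spec hex⟩
  rcases Nat.eq_zero_or_pos t₁ with h0 | h0
  · rw [h0, cutP_zero]; omega
  · have hlt : ¬ s < cutP σ u p (t₁ - 1 + 1) := Nat.find_min hex (by omega)
    have h1 : t₁ - 1 + 1 = t₁ := by omega
    rw [h1] at hlt
    omega

end Fin
end CutLemmas

section Perron
variable {A : Type*} [Fintype A] [Nonempty A] [DecidableEq A] {σ : A → List A}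

omit [Nonempty A] in
lemma sum_count_eq_length (l : List A) : ∑ b, l.count b = l.length := by
  induction l with
  | nil => simp
  | cons a l ih =>
      simp only [List.count_cons, List.length_cons, Finset.sum_add_distrib, ih]
      simp

lemma count_substWord (x : List A) (b : A) :
    (substWord σ x).count b = ∑ c, x.count c * (σ c).count b := by
  induction x with
  | nil => simp [substWord]
  | cons a x ih =>
      have h1 : substWord σ (a :: x) = σ a ++ substWord σ x := List.flatMap_cons ..
      rw [h1, List.count_append, ih]
      simp only [List.count_cons, add_mul, one_mul, Finset.sum_add_distrib]
      rw [add_comm]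
      congr 1
      simp [beq_iff_eq, ite_mul, Finset.sum_ite_eq]

lemma pow_entry (p : ℕ) (a b : A) :
    ((incMatrixR σ) ^ p) a b = ((substPow σ p [a]).count b : ℝ) := by
  induction p generalizing b with
  | zero =>
      simp only [pow_zero, Matrix.one_apply, substPow, Function.iterate_zero, id_eq,
        List.count_singleton]
      by_cases h : a = b
      · subst h; simp
      · simp [h, Ne.symm h]
  | succ p ih =>
      rw [pow_succ, Matrix.mul_apply]
      have h1 : substPow σ (p+1) [a] = substWord σ (substPow σ p [a]) := substPow_succ ..
      rw [h1, count_substWord]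
      push_cast
      congr 1
      ext c
      rw [ih c]
      rfl

lemma mulVec_pow {lam : ℝ} {β : A → ℝ} (heig : (incMatrixR σ).mulVec β = lam • β) (p : ℕ) :
    ((incMatrixR σ) ^ p).mulVec β = lam ^ p • β := by
  induction p with
  | zero => simp
  | succ p ih =>
      rw [pow_succ', ← Matrix.mulVec_mulVec, ih, Matrix.mulVec_smul, heig, smul_smul,
        pow_succ, mul_comm]

lemma eig_sum {lam : ℝ} {β : A → ℝ} (heig : (incMatrixR σ).mulVec β = lam • β) (p : ℕ) (a : A) :
    lam ^ p * β a = ∑ b, ((substPow σ p [a]).count b : ℝ) * β b := by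
  have h1 := congrFun (mulVec_pow heig p) a
  simp only [Matrix.mulVec, dotProduct, Pi.smul_apply, smul_eq_mul] at h1
  rw [← h1]
  congr 1
  ext b
  rw [pow_entry]

lemma perron_bounds {lam : ℝ} {β : A → ℝ} (heig : (incMatrixR σ).mulVec β = lam • β)
    (hβ : ∀ a, 0 < β a) (p : ℕ) (a : A)
    {mB MB : ℝ} (hm : ∀ b, mB ≤ β b) (hM : ∀ b, β b ≤ MB) (hm0 : 0 ≤ mB) :
    mB * (substPow σ p [a]).length ≤ lam ^ p * β a ∧
      lam ^ p * β a ≤ MB * (substPow σ p [a]).length := by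
  rw [eig_sum heig p a]
  have hlen : (((substPow σ p [a]).length : ℝ)) = ∑ b, ((substPow σ p [a]).count b : ℝ) := by
    rw [← sum_count_eq_length (substPow σ p [a])]
    push_cast
    rfl
  constructor
  · rw [hlen, Finset.mul_sum]
    apply Finset.sum_le_sum
    intro b _
    rw [mul_comm]
    exact mul_le_mul_of_nonneg_left (hm b) (by positivity)
  · rw [hlen, Finset.mul_sum]
    apply Finset.sum_le_sum
    intro b _
    rw [mul_comm (MB) _]
    exact mul_le_mul_of_nonneg_left (hM b) (by positivity)

end Perron

section WpowLemmas
variable {A : Type*} {u : ℕ → A}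

lemma wpow_succ_aux' (w : List A) (n : ℕ) : wpow w (n+1) = w ++ wpow w n := by
  simp [wpow, List.replicate_succ]

lemma wpow_length_aux' (w : List A) (n : ℕ) : (wpow w n).length = n * w.length := by
  induction n with
  | zero => simp [wpow]
  | succ n ih => rw [wpow_succ_aux', List.length_append, ih]; ring

lemma occ_period {w : List A} :
    ∀ n i₀, seg u i₀ (i₀ + n * w.length) = wpow w n →
      ∀ t, t + w.length < n * w.length → u (i₀ + t + w.length) = u (i₀ + t) := by
  intro n
  induction n with
  | zero => intro i₀ _ t ht; simp at ht
  | succ n ih =>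
      intro i₀ hocc t ht
      set m := w.length with hmdef
      rcases Nat.eq_zero_or_pos n with h0 | h0
      · subst h0; simp at ht
      have hnm : (n+1) * m = n * m + m := by ring
      rw [hnm] at hocc ht
      have hw1 : wpow w (n+1) = w ++ wpow w n := wpow_succ_aux' w n
      rw [hw1] at hocc
      have hmle : m ≤ n * m := Nat.le_mul_of_pos_left m h0
      rw [← seg_append (show i₀ ≤ i₀ + m by omega) (show i₀ + m ≤ i₀ + (n*m+m) by omega)]
        at hocc
      obtain ⟨hw_eq, hrest⟩ := List.append_inj hocc (by simp [seg_length]; exact hmdef)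
      obtain ⟨n', rfl⟩ : ∃ n', n = n' + 1 := ⟨n - 1, by omega⟩
      have hn'm : (n'+1) * m = n' * m + m := by ring
      have hw2 : wpow w (n'+1) = w ++ wpow w n' := wpow_succ_aux' w n'
      have h2 := hrest
      rw [hw2, ← seg_append (show i₀ + m ≤ i₀ + m + m by omega)
        (show i₀ + m + m ≤ i₀ + ((n'+1)*m+m) by omega)] at h2
      obtain ⟨hw_eq2, _⟩ := List.append_inj h2 (by simp [seg_length]; exact hmdef)
      rcases Nat.lt_or_ge t m with hc | hc
      · have h3 := forall_of_seg_eq (L := m)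
          ((by simpa using hw_eq.trans hw_eq2.symm : seg u i₀ (i₀ + m) = seg u (i₀+m) ((i₀+m) + m)))
          t hc
        have e : i₀ + m + t = i₀ + t + m := by omega
        rw [e] at h3
        exact h3.symm
      · have hseg : seg u (i₀+m) ((i₀+m) + (n'+1) * m) = wpow w (n'+1) := by
          have e : (i₀+m) + (n'+1) * m = i₀ + ((n'+1)*m + m) := by omega
          rw [e]
          exact hrest
        have h4 := ih (i₀ + m) hseg (t - m) (by omega)
        have e1 : i₀ + m + (t - m) + m = i₀ + t + m := by omega
        have e2 : i₀ + m + (t - m) = i₀ + t := by omega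
        rw [e1, e2] at h4
        exact h4

end WpowLemmas

section GapLemmas
variable {A : Type*} {σ : A → List A} {u : ℕ → A}

lemma substPow_cons (p : ℕ) (a : A) (x : List A) :
    substPow σ p (a :: x) = substPow σ p [a] ++ substPow σ p x := by
  rw [← substPow_append]; rfl

lemma two_le_len_prim [Fintype A] (h2 : 2 ≤ Fintype.card A) {k : ℕ}
    (hk : ∀ a b : A, a ∈ substPow σ k [b]) (b : A) :
    2 ≤ (substPow σ k [b]).length := by
  obtain ⟨a₀, a₁, hne⟩ := Fintype.exists_pair_of_one_lt_card (α := A) (by omega)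
  rcases hl : substPow σ k [b] with _ | ⟨c, l⟩
  · exact absurd (hl ▸ hk a₀ b) (List.not_mem_nil (a := a₀))
  · rcases l with _ | ⟨d, l'⟩
    · have h0 := hl ▸ hk a₀ b
      have h1 := hl ▸ hk a₁ b
      simp at h0 h1
      exact absurd (h0.trans h1.symm) hne
    · simp

lemma double_len {k : ℕ} (h2len : ∀ a : A, 2 ≤ (substPow σ k [a]).length) (x : List A) :
    2 * x.length ≤ (substPow σ k x).length := by
  induction x with
  | nil => simp [substPow_nil]
  | cons a x ih =>
      rw [substPow_cons, List.length_append, List.length_cons]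
      have := h2len a
      omega

lemma pow_len {k : ℕ} (h2len : ∀ a : A, 2 ≤ (substPow σ k [a]).length) :
    ∀ (j : ℕ) (x : List A), 2 ^ j * x.length ≤ (substPow σ (k * j) x).length := by
  intro j
  induction j with
  | zero => intro x; simp [substPow]
  | succ j ih =>
      intro x
      have e : k * (j + 1) = k * j + k := by ring
      rw [e, substPow_add]
      calc 2 ^ (j+1) * x.length = 2 ^ j * (2 * x.length) := by ring
        _ ≤ 2 ^ j * (substPow σ k x).length :=
            Nat.mul_le_mul_left _ (double_len h2len x)
        _ ≤ _ := ih _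

lemma exists_big [Fintype A] (h2 : 2 ≤ Fintype.card A)
    (hprim : ∃ k : ℕ, ∀ a b : A, a ∈ substPow σ k [b]) (m : ℕ) :
    ∃ p, ∀ a : A, m ≤ (substPow σ p [a]).length := by
  obtain ⟨k, hk⟩ := hprim
  have h2len := two_le_len_prim h2 hk
  refine ⟨k * m, fun a => ?_⟩
  have h1 := pow_len h2len m [a]
  have h2m : m ≤ 2 ^ m := Nat.le_of_lt (Nat.lt_two_pow_self (n := m))
  simp only [List.length_singleton, mul_one] at h1
  omega

lemma factor2_infix [Fintype A] (h2 : 2 ≤ Fintype.card A) (hσne : ∀ a, σ a ≠ [])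
    (hprim : ∃ k : ℕ, ∀ a b : A, a ∈ substPow σ k [b])
    (hfix : IsFixedPoint σ u) (j : ℕ) :
    ∃ q, ∀ b, seg u j (j + 2) <:+: substPow σ q [b] := by
  obtain ⟨k, hk⟩ := hprim
  obtain ⟨p', hp'⟩ := exists_big h2 ⟨k, hk⟩ (j + 2)
  refine ⟨p' + k, fun b => ?_⟩
  obtain ⟨l1, l2, hsp⟩ := List.append_of_mem (hk (u 0) b)
  rw [substPow_add, hsp]
  have e : l1 ++ u 0 :: l2 = l1 ++ [u 0] ++ l2 := by simp
  rw [e, substPow_append, substPow_append]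
  have h01 : seg u 0 1 = [u 0] := by simp [seg, List.range_succ]
  have hfb : substPow σ p' [u 0] = seg u 0 (substPow σ p' [u 0]).length := by
    conv_lhs => rw [← h01]
    rw [fixpow hfix p' 1, h01]
  have hinf : seg u j (j + 2) <:+: substPow σ p' [u 0] := by
    rw [hfb]
    have hL := hp' (u 0)
    have : seg u 0 (substPow σ p' [u 0]).length =
        seg u 0 (0 + (substPow σ p' [u 0]).length) := by norm_num
    rw [this]
    exact seg_infix_seg (by omega) (by omega) (by omega)
  obtain ⟨s, t, hst⟩ := hinf
  exact ⟨substPow σ p' l1 ++ s, t ++ substPow σ p' l2, by rw [← hst]; simp⟩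

lemma gap_exists [Fintype A] [Nonempty A] (h2 : 2 ≤ Fintype.card A)
    (hσne : ∀ a, σ a ≠ [])
    (hprim : ∃ k : ℕ, ∀ a b : A, a ∈ substPow σ k [b])
    (hfix : IsFixedPoint σ u) (j : ℕ) :
    ∃ G, IsGap u (seg u j (j + 2)) G := by
  obtain ⟨q, hq⟩ := factor2_infix h2 hσne ⟨hprim.choose, hprim.choose_spec⟩ hfix j
  refine ⟨2 * Sp σ q, fun i => ?_⟩
  obtain ⟨t, ht1, ht2⟩ := exists_cut_ge (u := u) hσne q i
  have hblk : seg u (cutP σ u q t) (cutP σ u q (t + 1)) = substPow σ q (seg u t (t + 1)) :=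
    cutP_block hfix q t 1
  rw [seg_single] at hblk
  have hc1 : cutP σ u q (t + 1) ≤ i + 2 * Sp σ q := by
    have h1 := cutP_succ (σ := σ) (u := u) q t
    have h2 := len_le_Sp (σ := σ) q (u t)
    omega
  have hbin : seg u (cutP σ u q t) (cutP σ u q (t + 1)) <:+: seg u i (i + 2 * Sp σ q) :=
    seg_infix_seg ht1 (cutP_mono q (by omega)) hc1
  exact (hblk ▸ hq (u t)).trans hbin

end GapLemmas

/-- Lemma 2.3 (Mossé, Théorème 2.4): if `wⁿ ∈ L(u)` with `w ∈ A⁺`, then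
`n < 2 λ (g+1) C²`. -/
theorem stmt_4 (A : Type*) [Fintype A] [DecidableEq A] [Nonempty A]
    (h2 : 2 ≤ Fintype.card A)
    (σ : A → List A) (hσne : ∀ a, σ a ≠ [])
    (hprim : IsPrimitiveSubst σ)
    (u : ℕ → A) (hfix : IsFixedPoint σ u) (hap : AperiodicSeq u)
    (lam : ℝ) (β : A → ℝ) (hβ : ∀ a, 0 < β a)
    (heig : (incMatrixR σ).mulVec β = lam • β) :
    ∀ (n : ℕ) (w : List A), 1 ≤ n → w ≠ [] → wpow w n ∈ lang u →
      (n : ℝ) < 2 * lam * ((gapConst u : ℝ) + 1) * (Cst β : ℝ) ^ 2 := by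
  intro n w hn1 hwne hlangmem
  by_contra hcon
  push_neg at hcon
  set g := gapConst u with hgdef
  set m := w.length with hmdef
  have hm1 : 1 ≤ m := List.length_pos_iff.mpr hwne
  classical
  -- the occurrence of `w^n`
  obtain ⟨i₀, N, hocc⟩ := hlangmem
  have hwlen : (wpow w n).length = n * m := wpow_length_aux' w n
  have hN : N = n * m := by
    have := congrArg List.length hocc
    rw [seg_length, hwlen] at this
    omega
  subst hN
  have hocc' : seg u i₀ (i₀ + n * m) = wpow w n := hocc.symm
  -- periodicity of `u` on the occurrence window
  have hper : ∀ y, i₀ ≤ y → y + m < i₀ + n * m → u (y + m) = u y := by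
    intro y h1 h2
    have hocc2 : seg u i₀ (i₀ + n * w.length) = wpow w n := by rw [← hmdef]; exact hocc'
    have h3 := occ_period (u := u) n i₀ hocc2 (y - i₀) (by rw [← hmdef]; omega)
    rw [← hmdef] at h3
    have e1 : i₀ + (y - i₀) + m = y + m := by omega
    have e2 : i₀ + (y - i₀) = y := by omega
    rw [e1, e2] at h3
    exact h3
  -- every two-letter factor of `u` has gap `g`
  have hbddS : BddAbove {mm | ∃ v ∈ factors u 2, mm = minGap u v} := by
    apply Set.Finite.bddAbove
    have h2fin : (factors u 2).Finite := by
      apply Set.Finite.subset (Set.finite_range (fun pr : A × A => [pr.1, pr.2]))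
      rintro v ⟨i, rfl⟩
      refine ⟨(u i, u (i + 1)), ?_⟩
      simp [seg, List.range_succ]
    apply Set.Finite.subset (h2fin.image (minGap u))
    rintro mv ⟨v, hv, rfl⟩
    exact ⟨v, hv, rfl⟩
  have hgap : ∀ j, IsGap u (seg u j (j + 2)) g := by
    intro j
    obtain ⟨G, hG⟩ := gap_exists h2 hσne hprim hfix j
    have hne : {G' | IsGap u (seg u j (j + 2)) G'}.Nonempty := ⟨G, hG⟩
    have hmem : IsGap u (seg u j (j + 2)) (minGap u (seg u j (j + 2))) := Nat.sInf_mem hne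
    have hle : minGap u (seg u j (j + 2)) ≤ g := by
      have hgc : g = sSup {mm | ∃ v ∈ factors u 2, mm = minGap u v} := rfl
      rw [hgc]
      exact le_csSup hbddS ⟨seg u j (j + 2), ⟨j, rfl⟩, rfl⟩
    intro i
    exact (hmem i).trans (seg_infix_seg (le_refl i) (by omega) (by omega))
  -- choice of the exponent p
  have hex : ∃ p, ∀ a : A, m + 1 ≤ (substPow σ p [a]).length := exists_big h2 hprim (m + 1)
  set p := Nat.find hex with hpdef
  have hIp : ∀ a, m + 1 ≤ (substPow σ p [a]).length := Nat.find_spec hex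
  have hp1 : 1 ≤ p := by
    by_contra hp0
    have hp0' : p = 0 := by omega
    have hcontra := hIp (Classical.arbitrary A)
    rw [hp0'] at hcontra
    simp [substPow] at hcontra
    omega
  obtain ⟨a', ha'⟩ : ∃ a', (substPow σ (p - 1) [a']).length ≤ m := by
    have hmin := Nat.find_min hex (show p - 1 < p by omega)
    push_neg at hmin
    obtain ⟨a', ha'⟩ := hmin
    exact ⟨a', by omega⟩
  -- Perron--Frobenius bounds
  set MB := Finset.univ.sup' Finset.univ_nonempty β with hMBdef
  set mB := Finset.univ.inf' Finset.univ_nonempty β with hmBdef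
  have hmBle : ∀ b, mB ≤ β b := fun b => Finset.inf'_le β (Finset.mem_univ b)
  have hMBge : ∀ b, β b ≤ MB := fun b => Finset.le_sup' β (Finset.mem_univ b)
  have hmB0 : 0 < mB := by
    obtain ⟨b, _, hb⟩ := Finset.exists_mem_eq_inf' (Finset.univ_nonempty (α := A)) β
    rw [hmBdef, hb]
    exact hβ b
  have hMB0 : 0 < MB :=
    lt_of_lt_of_le hmB0 ((hmBle (Classical.arbitrary A)).trans (hMBge _))
  have hlam0 : 0 < lam := by
    have a0 := Classical.arbitrary A
    have hb := (perron_bounds heig hβ 1 a0 hmBle hMBge hmB0.le).1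
    have hl1 : 1 ≤ (substPow σ 1 [a0]).length := one_le_length_substPow hσne 1 a0
    have hl1' : (1 : ℝ) ≤ ((substPow σ 1 [a0]).length : ℝ) := by exact_mod_cast hl1
    rw [pow_one] at hb
    nlinarith [hβ a0, hmB0]
  have hC : MB / mB ≤ (Cst β : ℝ) := by
    have hcst : Cst β = ⌈MB / mB⌉₊ := rfl
    rw [hcst]
    exact Nat.le_ceil _
  have hMC : MB ≤ (Cst β : ℝ) * mB := by
    rw [div_le_iff₀ hmB0] at hC
    linarith
  -- the bound on S_p
  obtain ⟨astar, _, hastar⟩ := Finset.exists_mem_eq_sup' (Finset.univ_nonempty (α := A))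
    (fun a => (substPow σ p [a]).length)
  have hSeq : Sp σ p = (substPow σ p [astar]).length := hastar
  have hb1 := (perron_bounds heig hβ p astar hmBle hMBge hmB0.le).1
  have hb2 := (perron_bounds heig hβ (p - 1) a' hmBle hMBge hmB0.le).2
  have hpp : lam ^ p = lam * lam ^ (p - 1) := by
    conv_lhs => rw [show p = (p - 1) + 1 by omega]
    rw [pow_succ]
    ring
  have hSb : (Sp σ p : ℝ) ≤ lam * (Cst β : ℝ) ^ 2 * m := by
    have h1 : mB * ((substPow σ p [astar]).length : ℝ) ≤ lam * lam ^ (p - 1) * MB := by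
      have h1a := mul_le_mul_of_nonneg_left (hMBge astar) (by positivity : (0:ℝ) ≤ lam ^ p)
      rw [hpp] at hb1 h1a
      linarith
    have h2 : lam ^ (p - 1) * mB ≤ MB * m := by
      have h2a : lam ^ (p - 1) * mB ≤ lam ^ (p - 1) * β a' :=
        mul_le_mul_of_nonneg_left (hmBle a') (by positivity)
      have h2b : MB * ((substPow σ (p - 1) [a']).length : ℝ) ≤ MB * m := by
        apply mul_le_mul_of_nonneg_left _ hMB0.le
        exact_mod_cast ha'
      linarith
    have s1 : mB * (mB * ((substPow σ p [astar]).length : ℝ)) ≤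
        mB * (lam * lam ^ (p - 1) * MB) := mul_le_mul_of_nonneg_left h1 hmB0.le
    have s2 : lam * MB * (lam ^ (p - 1) * mB) ≤ lam * MB * (MB * m) :=
      mul_le_mul_of_nonneg_left h2 (by positivity)
    have s3 : MB * MB ≤ ((Cst β : ℝ) * mB) * ((Cst β : ℝ) * mB) :=
      mul_le_mul hMC hMC hMB0.le (by positivity)
    have s4 : lam * (m : ℝ) * (MB * MB) ≤
        lam * (m : ℝ) * (((Cst β : ℝ) * mB) * ((Cst β : ℝ) * mB)) :=
      mul_le_mul_of_nonneg_left s3 (by positivity)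
    have hkey : mB * mB * ((substPow σ p [astar]).length : ℝ) ≤
        mB * mB * (lam * (Cst β : ℝ) ^ 2 * m) := by linarith [s1, s2, s4]
    have hfin : ((substPow σ p [astar]).length : ℝ) ≤ lam * (Cst β : ℝ) ^ 2 * m :=
      le_of_mul_le_mul_left hkey (mul_pos hmB0 hmB0)
    rw [hSeq]
    exact hfin
  -- the key counting inequality
  have hprod : (g + 1) * Sp σ p ≤ n * m := by
    have hcast : ((g : ℝ) + 1) * (Sp σ p : ℝ) ≤ (n : ℝ) * (m : ℝ) := by
      have t1 : ((g : ℝ) + 1) * (Sp σ p : ℝ) ≤ ((g : ℝ) + 1) * (lam * (Cst β : ℝ) ^ 2 * m) :=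
        mul_le_mul_of_nonneg_left hSb (by positivity)
      have t2 : (2 * lam * ((g : ℝ) + 1) * (Cst β : ℝ) ^ 2) * m ≤ (n : ℝ) * m :=
        mul_le_mul_of_nonneg_right hcon (by positivity)
      have t3 : (0 : ℝ) ≤ (n : ℝ) * m := by positivity
      nlinarith [t1, t2, t3]
    exact_mod_cast hcast
  -- every shift by m of u is trivial
  have hfinal : ∀ s, u (s + m) = u s := by
    intro s
    obtain ⟨t, hts, hts2⟩ := exists_cut_cover (σ := σ) (u := u) hσne p s
    have e12 : t + 1 + 1 = t + 2 := by omega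
    have hcsucc := cutP_succ (σ := σ) (u := u) p (t + 1)
    rw [e12] at hcsucc
    have hc2 : s + (m + 1) ≤ cutP σ u p (t + 2) := by
      have := hIp (u (t + 1))
      omega
    obtain ⟨t₀, ht₀1, ht₀2⟩ := exists_cut_ge (σ := σ) (u := u) hσne p i₀
    have hvin := hgap t t₀
    obtain ⟨jj, hj1, hj2, hj3⟩ := infix_seg hvin
    have hlen2 : (seg u t (t + 2)).length = 2 := by rw [seg_length]; omega
    rw [hlen2] at hj2
    have hsegeq : seg u jj (jj + 2) = seg u t (t + 2) := by
      apply seg_eq_of_forall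
      intro e he
      have h4 := hj3 e (by rw [hlen2]; exact he)
      rw [seg_getElem] at h4
      exact h4
    have hblkj := cutP_block (σ := σ) hfix p jj 2
    have hblkt := cutP_block (σ := σ) hfix p t 2
    have hbe : seg u (cutP σ u p jj) (cutP σ u p (jj + 2)) =
        seg u (cutP σ u p t) (cutP σ u p (t + 2)) := by
      rw [hblkj, hblkt, hsegeq]
    have hm1j : cutP σ u p jj ≤ cutP σ u p (jj + 2) := cutP_mono p (by omega)
    have hm1t : cutP σ u p t ≤ cutP σ u p (t + 2) := cutP_mono p (by omega)
    have hm2t : cutP σ u p (t + 1) ≤ cutP σ u p (t + 2) := cutP_mono p (by omega)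
    have hleq : cutP σ u p (jj + 2) - cutP σ u p jj =
        cutP σ u p (t + 2) - cutP σ u p t := by
      have := congrArg List.length hbe
      simp only [seg_length] at this
      omega
    set L := cutP σ u p (t + 2) - cutP σ u p t with hLdef
    have hbe' : seg u (cutP σ u p jj) (cutP σ u p jj + L) =
        seg u (cutP σ u p t) (cutP σ u p t + L) := by
      have e1 : cutP σ u p jj + L = cutP σ u p (jj + 2) := by omega
      have e2 : cutP σ u p t + L = cutP σ u p (t + 2) := by omega
      rw [e1, e2]
      exact hbe
    have hptw := forall_of_seg_eq hbe'
    have hq0 : u (cutP σ u p jj + (s - cutP σ u p t)) = u s := by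
      have h5 := hptw (s - cutP σ u p t) (by omega)
      have e : cutP σ u p t + (s - cutP σ u p t) = s := by omega
      rw [e] at h5
      exact h5
    have hqm : u (cutP σ u p jj + (s - cutP σ u p t) + m) = u (s + m) := by
      have h5 := hptw (s - cutP σ u p t + m) (by omega)
      have e1 : cutP σ u p jj + (s - cutP σ u p t + m) =
          cutP σ u p jj + (s - cutP σ u p t) + m := by omega
      have e2 : cutP σ u p t + (s - cutP σ u p t + m) = s + m := by omega
      rw [e1, e2] at h5
      exact h5
    have hcj : cutP σ u p t₀ ≤ cutP σ u p jj := cutP_mono p hj1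
    have hj22 : cutP σ u p (jj + 2) ≤ cutP σ u p (t₀ + g) := cutP_mono p (by omega)
    have hadd := cutP_add_le (σ := σ) (u := u) p t₀ g
    have hgs : (g + 1) * Sp σ p = g * Sp σ p + Sp σ p := by ring
    have hup : cutP σ u p jj + (s - cutP σ u p t) + m + 1 ≤ i₀ + n * m := by omega
    have hlow : i₀ ≤ cutP σ u p jj + (s - cutP σ u p t) := by omega
    have hper' := hper (cutP σ u p jj + (s - cutP σ u p t)) hlow (by omega)
    exact hqm.symm.trans (hper'.trans hq0)
  exact hap m hm1 (funext hfinal)
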